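/- For any two-point flux h : E × E → E, any sequence of states u : ℤ → E, any p ≥ 1 and any coefficients c_1, …, c_p ∈ ℝ, the LMR fluxes f_{k+1/2} := ∑_{r=1}^{p} c_r ∑_{q=0}^{r−1} h(u_{k−q}, u_{k+r−q}) satisfy the telescoping identity f_{k−1/2} − f_{k+1/2} = ∑_{r=1}^{p} c_r ( h(u_{k−r}, u_k) − h(u_k, u_{k+r}) ) for every k ∈ ℤ. -/
import Mathlib


/-- Telescoping identity for the LMR fluxes: with
`f_{k+1/2} := ∑_{r=1}^{p} c_r ∑_{q=0}^{r−1} h(u_{k−q}, u_{k+r−q})`, one has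
`f_{k−1/2} − f_{k+1/2} = ∑_{r=1}^{p} c_r (h(u_{k−r}, u_k) − h(u_k, u_{k+r}))`. -/
theorem lmr_flux_telescoping
    (N : ℕ) (hN : 1 ≤ N)
    (h : EuclideanSpace ℝ (Fin N) × EuclideanSpace ℝ (Fin N) → EuclideanSpace ℝ (Fin N))
    (u : ℤ → EuclideanSpace ℝ (Fin N))
    (p : ℕ) (hp : 1 ≤ p) (c : ℕ → ℝ) (k : ℤ) :
    (∑ r ∈ Finset.Icc 1 p, c r •
        ∑ q ∈ Finset.range r, h (u ((k - 1) - (q : ℤ)), u ((k - 1) + (r : ℤ) - (q : ℤ))))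
      - (∑ r ∈ Finset.Icc 1 p, c r •
          ∑ q ∈ Finset.range r, h (u (k - (q : ℤ)), u (k + (r : ℤ) - (q : ℤ))))
      = ∑ r ∈ Finset.Icc 1 p, c r •
          (h (u (k - (r : ℤ)), u k) - h (u k, u (k + (r : ℤ)))) := by
  rw [← Finset.sum_sub_distrib]
  refine Finset.sum_congr rfl fun r _ => ?_
  rw [← smul_sub]
  congr 1
  set f : ℕ → EuclideanSpace ℝ (Fin N) :=
    fun q => h (u (k - (q : ℤ)), u (k + (r : ℤ) - (q : ℤ))) with hf
  have h1 : (∑ q ∈ Finset.range r,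
      h (u ((k - 1) - (q : ℤ)), u ((k - 1) + (r : ℤ) - (q : ℤ))))
      = ∑ q ∈ Finset.range r, f (q + 1) := by
    refine Finset.sum_congr rfl fun q _ => ?_
    simp only [hf]
    congr 2 <;> push_cast <;> ring
  rw [h1]
  have h2 : ∑ q ∈ Finset.range (r + 1), f q
      = (∑ q ∈ Finset.range r, f (q + 1)) + f 0 := Finset.sum_range_succ' f r
  have h3 : ∑ q ∈ Finset.range (r + 1), f q
      = (∑ q ∈ Finset.range r, f q) + f r := Finset.sum_range_succ f r
  have h4 : (∑ q ∈ Finset.range r, f (q + 1)) + f 0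
      = (∑ q ∈ Finset.range r, f q) + f r := by rw [← h2, h3]
  have hf0 : f 0 = h (u k, u (k + (r : ℤ))) := by simp [hf]
  have hfr : f r = h (u (k - (r : ℤ)), u k) := by simp [hf]
  rw [hf0, hfr] at h4
  linear_combination (norm := abel) h4
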